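/- Let H be a real Hilbert space, let J : H → ℝ be nonnegative and sequentially weakly continuous (i.e., J(g_l) → J(g) whenever g_l → g weakly in H), and let R > 0. For s ∈ (−R, ∞) define J_*(s) = inf { J(g) : g ∈ H, ‖g‖ ≤ R + s } and write J_* = J_*(0). Then lim_{ε→0⁺} J_*(ε) = J_* and lim_{ε→0⁺} J_*(−ε) = J_*. -/

import Mathlib

open Filter


theorem weak_seq_compact
    {H : Type*} [NormedAddCommGroup H] [InnerProductSpace ℝ H] [CompleteSpace H]
    (u : ℕ → H) (C : ℝ) (hC : 0 ≤ C) (hu : ∀ l, ‖u l‖ ≤ C) :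
    ∃ φ : ℕ → ℕ, StrictMono φ ∧ ∃ g : H,
      ∀ y : H, Tendsto (fun l => (inner ℝ (u (φ l)) y : ℝ)) atTop (nhds ((inner ℝ g y : ℝ))) := by
  -- Step A : diagonal extraction via sequential compactness of a compact metrizable product
  have hbound : ∀ l k, (fun l k => (inner ℝ (u l) (u k) : ℝ)) l k ∈ Set.Icc (-(C*C)) (C*C) := by
    intro l k
    have h1 : |(inner ℝ (u l) (u k) : ℝ)| ≤ ‖u l‖ * ‖u k‖ := abs_real_inner_le_norm _ _
    have h2 : ‖u l‖ * ‖u k‖ ≤ C * C := mul_le_mul (hu l) (hu k) (norm_nonneg _) hC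
    constructor <;> [linarith [neg_abs_le ((inner ℝ (u l) (u k) : ℝ))]; linarith [le_abs_self ((inner ℝ (u l) (u k) : ℝ))]]
  have hcomp : IsCompact (Set.pi Set.univ (fun _ : ℕ => Set.Icc (-(C*C)) (C*C))) :=
    isCompact_univ_pi (fun _ => isCompact_Icc)
  obtain ⟨x, -, φ, hφ, hx⟩ := hcomp.isSeqCompact (x := fun l k => (inner ℝ (u l) (u k) : ℝ))
    (fun l => Set.mem_univ_pi.2 (fun k => hbound l k))
  refine ⟨φ, hφ, ?_⟩
  have hxk : ∀ k, Tendsto (fun l => (inner ℝ (u (φ l)) (u k) : ℝ)) atTop (nhds (x k)) :=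
    fun k => (tendsto_pi_nhds.1 hx) k
  -- Step B : the set of y for which the inner ℝ products converge is a closed submodule
  set S : Submodule ℝ H :=
    { carrier := {y | ∃ c : ℝ, Tendsto (fun l => (inner ℝ (u (φ l)) y : ℝ)) atTop (nhds c)}
      add_mem' := by
        rintro a b ⟨c, hc⟩ ⟨d, hd⟩
        exact ⟨c + d, by simpa [inner_add_right] using hc.add hd⟩
      zero_mem' := ⟨0, by simp [tendsto_const_nhds]⟩
      smul_mem' := by
        rintro r a ⟨c, hc⟩
        exact ⟨r * c, by simpa [real_inner_smul_right] using hc.const_mul r⟩ } with hS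
  have hSclosed : IsClosed (S : Set H) := by
    rw [← closure_subset_iff_isClosed]
    intro y hy
    have hcau : CauchySeq (fun l => (inner ℝ (u (φ l)) y : ℝ)) := by
      rw [Metric.cauchySeq_iff']
      intro ε hε
      have hpos : 0 < ε / (4 * (C + 1)) := by positivity
      obtain ⟨z, hzS, hzd⟩ := Metric.mem_closure_iff.1 hy _ hpos
      obtain ⟨c, hc⟩ := hzS
      have hcau' : CauchySeq (fun l => (inner ℝ (u (φ l)) z : ℝ)) := hc.cauchySeq
      obtain ⟨N, hN⟩ := Metric.cauchySeq_iff'.1 hcau' (ε/2) (by linarith)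
      refine ⟨N, fun n hn => ?_⟩
      have key : ∀ m, |(inner ℝ (u (φ m)) y : ℝ) - (inner ℝ (u (φ m)) z : ℝ)| ≤ ε / 4 := by
        intro m
        have : (inner ℝ (u (φ m)) y : ℝ) - (inner ℝ (u (φ m)) z : ℝ) = inner ℝ (u (φ m)) (y - z) := by
          rw [inner_sub_right]
        rw [this]
        have h1 : |(inner ℝ (u (φ m)) (y - z) : ℝ)| ≤ ‖u (φ m)‖ * ‖y - z‖ := abs_real_inner_le_norm _ _
        have h2 : ‖y - z‖ ≤ ε / (4 * (C + 1)) := by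
          rw [← dist_eq_norm]; exact le_of_lt hzd
        have h3 : ‖u (φ m)‖ * ‖y - z‖ ≤ C * (ε / (4 * (C + 1))) :=
          mul_le_mul (hu _) h2 (norm_nonneg _) hC
        have h4 : C * (ε / (4 * (C + 1))) ≤ ε / 4 := by
          have hC1 : (0:ℝ) < C + 1 := by linarith
          rw [show C * (ε / (4 * (C + 1))) = ε / 4 * (C / (C + 1)) by field_simp]
          have hle : C / (C + 1) ≤ 1 := div_le_one_of_le₀ (by linarith) hC1.le
          nlinarith
        linarith
      have hNd := hN n hn
      rw [Real.dist_eq] at *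
      calc |(inner ℝ (u (φ n)) y : ℝ) - (inner ℝ (u (φ N)) y : ℝ)|
          ≤ |(inner ℝ (u (φ n)) y : ℝ) - (inner ℝ (u (φ n)) z : ℝ)|
            + |(inner ℝ (u (φ n)) z : ℝ) - (inner ℝ (u (φ N)) z : ℝ)|
            + |(inner ℝ (u (φ N)) z : ℝ) - (inner ℝ (u (φ N)) y : ℝ)| := by
            have t1 := abs_sub_le ((inner ℝ (u (φ n)) y : ℝ)) ((inner ℝ (u (φ n)) z : ℝ)) ((inner ℝ (u (φ N)) y : ℝ))
            have t2 := abs_sub_le ((inner ℝ (u (φ n)) z : ℝ)) ((inner ℝ (u (φ N)) z : ℝ)) ((inner ℝ (u (φ N)) y : ℝ))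
            linarith
        _ < ε := by
            have := key n
            have h2 := key N
            rw [abs_sub_comm] at h2
            linarith
    obtain ⟨c, hc⟩ := cauchySeq_tendsto_of_complete hcau
    exact ⟨c, hc⟩
  -- every y has a limit, via orthogonal projection onto the closed span
  have hrange : Set.range u ⊆ (S : Set H) := by
    rintro _ ⟨k, rfl⟩
    exact ⟨x k, hxk k⟩
  set K : Submodule ℝ H := Submodule.span ℝ (Set.range u) with hK
  have hKS : closure (K : Set H) ⊆ (S : Set H) :=
    closure_minimal (Submodule.span_le.2 hrange) hSclosed
  set Kc : Submodule ℝ H := K.topologicalClosure with hKc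
  haveI : CompleteSpace Kc := (Submodule.isClosed_topologicalClosure K).completeSpace_coe
  have hall : ∀ y : H, ∃ c : ℝ,
      Tendsto (fun l => (inner ℝ (u (φ l)) y : ℝ)) atTop (nhds c) := by
    intro y
    have hPy : (↑(Kc.orthogonalProjectionOnto y) : H) ∈ (S : Set H) := by
      apply hKS
      have := (Kc.orthogonalProjectionOnto y).2
      rw [← Submodule.topologicalClosure_coe]; exact this
    obtain ⟨c, hc⟩ := hPy
    refine ⟨c, ?_⟩
    have heq : ∀ l, (inner ℝ (u (φ l)) y : ℝ)
        = (inner ℝ (u (φ l)) ((Kc.orthogonalProjectionOnto y : H)) : ℝ) := by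
      intro l
      have hmem : u (φ l) ∈ Kc := K.le_topologicalClosure (Submodule.subset_span ⟨φ l, rfl⟩)
      have horth : y - (Kc.orthogonalProjectionOnto y : H) ∈ Kcᗮ :=
        Kc.sub_starProjection_mem_orthogonal y
      have h0 : (inner ℝ (u (φ l)) (y - (Kc.orthogonalProjectionOnto y : H)) : ℝ) = 0 :=
        Submodule.inner_right_of_mem_orthogonal hmem horth
      have := inner_sub_right (𝕜 := ℝ) (u (φ l)) y ((Kc.orthogonalProjectionOnto y : H))
      rw [this] at h0
      linarith
    simp only [heq]
    exact hc
  -- Step C : build the weak limit via the Riesz representation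
  choose c hc using hall
  have hbound2 : ∀ y, |c y| ≤ C * ‖y‖ := by
    intro y
    apply le_of_tendsto (hc y).abs
    filter_upwards with l
    exact (abs_real_inner_le_norm _ _).trans (mul_le_mul_of_nonneg_right (hu _) (norm_nonneg _))
  have hadd : ∀ a b, c (a + b) = c a + c b := fun a b =>
    tendsto_nhds_unique (hc (a+b)) (by simpa [inner_add_right] using (hc a).add (hc b))
  have hsmul : ∀ (r : ℝ) a, c (r • a) = r * c a := fun r a =>
    tendsto_nhds_unique (hc (r • a)) (by simpa [real_inner_smul_right] using (hc a).const_mul r)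
  let F : H →L[ℝ] ℝ := LinearMap.mkContinuous
    { toFun := c, map_add' := hadd, map_smul' := hsmul } C
    (fun y => by simpa [Real.norm_eq_abs] using hbound2 y)
  refine ⟨(InnerProductSpace.toDual ℝ H).symm F, fun y => ?_⟩
  rw [InnerProductSpace.toDual_symm_apply]
  exact hc y


/-- The infimum of a nonnegative sequentially weakly continuous functional on a real
Hilbert space over the closed ball of radius `R + s` depends continuously on `s` at
`s = 0`, from the right and from the left. -/
theorem inf_over_balls_continuous_in_radius
    {H : Type*} [NormedAddCommGroup H] [InnerProductSpace ℝ H] [CompleteSpace H]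
    (J : H → ℝ) (hJ0 : ∀ g, 0 ≤ J g)
    (hJw : ∀ (u : ℕ → H) (g : H),
      (∀ y : H, Tendsto (fun l => (inner ℝ (u l) y : ℝ)) atTop (nhds ((inner ℝ g y : ℝ)))) →
      Tendsto (fun l => J (u l)) atTop (nhds (J g)))
    (R : ℝ) (hR : 0 < R) :
    Tendsto (fun ε : ℝ => sInf (J '' {g : H | ‖g‖ ≤ R + ε}))
        (nhdsWithin 0 (Set.Ioi 0)) (nhds (sInf (J '' {g : H | ‖g‖ ≤ R})))
    ∧ Tendsto (fun ε : ℝ => sInf (J '' {g : H | ‖g‖ ≤ R - ε}))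
        (nhdsWithin 0 (Set.Ioi 0)) (nhds (sInf (J '' {g : H | ‖g‖ ≤ R}))) := by
  set m : ℝ → ℝ := fun r => sInf (J '' {g : H | ‖g‖ ≤ r}) with hm
  have hne : ∀ r : ℝ, 0 ≤ r → (J '' {g : H | ‖g‖ ≤ r}).Nonempty := by
    intro r hr
    exact ⟨J 0, 0, by simpa using hr, rfl⟩
  have hbdd : ∀ r : ℝ, BddBelow (J '' {g : H | ‖g‖ ≤ r}) := by
    intro r
    refine ⟨0, ?_⟩
    rintro a ⟨g, -, rfl⟩
    exact hJ0 g
  have hmono : ∀ r r' : ℝ, 0 ≤ r → r ≤ r' → m r' ≤ m r := by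
    intro r r' hr hrr
    exact csInf_le_csInf (hbdd r') (hne r hr) (Set.image_mono (fun g hg => le_trans hg hrr))
  have hle : ∀ (r : ℝ) (g : H), ‖g‖ ≤ r → m r ≤ J g := by
    intro r g hg
    exact csInf_le (hbdd r) ⟨g, hg, rfl⟩
  constructor
  · -- right limit
    rw [Metric.tendsto_nhds]
    intro δ hδ
    -- Claim A : some strictly larger ball already has infimum ≥ m R - δ/2
    have claimA : ∃ ε0 : ℝ, 0 < ε0 ∧ m R - δ/2 ≤ m (R + ε0) := by
      by_contra hcon
      push_neg at hcon
      have hpick : ∀ l : ℕ, ∃ g : H, ‖g‖ ≤ R + 1/(l+1) ∧ J g < m R - δ/2 := by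
        intro l
        have hl : (0:ℝ) < 1/(l+1) := by positivity
        have := hcon (1/(l+1)) hl
        obtain ⟨a, ⟨g, hg, rfl⟩, ha⟩ :=
          (csInf_lt_iff (hbdd _) (hne _ (by positivity))).1 this
        exact ⟨g, hg, ha⟩
      choose u hu1 hu2 using hpick
      have hub : ∀ l, ‖u l‖ ≤ R + 1 := by
        intro l
        refine (hu1 l).trans (by
          have : (1:ℝ)/(l+1) ≤ 1 := by
            rw [div_le_one (by positivity)]; linarith [Nat.cast_nonneg (α := ℝ) l]
          linarith)
      obtain ⟨φ, hφ, g, hw⟩ := weak_seq_compact u (R+1) (by linarith) hub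
      -- the weak limit is in the ball of radius R
      have hgR : ‖g‖ ≤ R := by
        have h1 : Tendsto (fun l => (inner ℝ (u (φ l)) g : ℝ)) atTop (nhds (inner ℝ g g : ℝ)) := hw g
        have h2 : Tendsto (fun l : ℕ => (R + 1/(φ l + 1)) * ‖g‖) atTop (nhds (R * ‖g‖)) := by
          have h3 : Tendsto (fun l : ℕ => 1/((l:ℝ)+1)) atTop (nhds 0) :=
            tendsto_one_div_add_atTop_nhds_zero_nat
          have h4 := h3.comp hφ.tendsto_atTop
          have h5 : Tendsto (fun l : ℕ => R + 1/((φ l : ℝ)+1)) atTop (nhds (R + 0)) :=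
            tendsto_const_nhds.add h4
          rw [add_zero] at h5
          simpa using h5.mul_const ‖g‖
        have hlim : (inner ℝ g g : ℝ) ≤ R * ‖g‖ := by
          refine le_of_tendsto_of_tendsto' h1 h2 (fun l => ?_)
          calc (inner ℝ (u (φ l)) g : ℝ) ≤ |(inner ℝ (u (φ l)) g : ℝ)| := le_abs_self _
            _ ≤ ‖u (φ l)‖ * ‖g‖ := abs_real_inner_le_norm _ _
            _ ≤ (R + 1/(φ l + 1)) * ‖g‖ :=
                mul_le_mul_of_nonneg_right (hu1 (φ l)) (norm_nonneg _)
        rw [real_inner_self_eq_norm_mul_norm] at hlim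
        rcases eq_or_lt_of_le (norm_nonneg g) with h | h
        · rw [← h]; exact hR.le
        · exact le_of_mul_le_mul_right hlim h
      have hJg : Tendsto (fun l => J (u (φ l))) atTop (nhds (J g)) := hJw _ _ hw
      have hJgle : J g ≤ m R - δ/2 :=
        le_of_tendsto hJg (Eventually.of_forall (fun l => (hu2 (φ l)).le))
      have := hle R g hgR
      linarith
    obtain ⟨ε0, hε0, hA⟩ := claimA
    filter_upwards [Ioo_mem_nhdsGT_of_mem (Set.left_mem_Ico.2 hε0)] with ε hε
    obtain ⟨hε1, hε2⟩ := hε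
    have h1 : m (R + ε) ≤ m R := hmono R (R + ε) hR.le (by linarith)
    have h2 : m (R + ε0) ≤ m (R + ε) := hmono (R + ε) (R + ε0) (by linarith) (by linarith)
    rw [Real.dist_eq, abs_sub_lt_iff]
    constructor <;> linarith
  · -- left limit
    rw [Metric.tendsto_nhds]
    intro δ hδ
    obtain ⟨a, ⟨g, hg, rfl⟩, hJg⟩ := Real.lt_sInf_add_pos (hne R hR.le) (half_pos hδ)
    -- J ((1 - ε/R) • g) tends to J g as ε → 0⁺
    have hcont : Tendsto (fun ε : ℝ => J ((1 - ε/R) • g)) (nhdsWithin 0 (Set.Ioi 0)) (nhds (J g)) := by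
      rw [tendsto_iff_seq_tendsto]
      intro e he
      have he0 : Tendsto e atTop (nhds 0) := he.mono_right nhdsWithin_le_nhds
      apply hJw
      intro y
      have h1 : Tendsto (fun l => (1 - e l / R)) atTop (nhds 1) := by
        have := (he0.div_const R)
        have h2 := tendsto_const_nhds (x := (1:ℝ)) (f := atTop (α := ℕ)) |>.sub this
        simpa using h2
      have h3 : Tendsto (fun l => (1 - e l / R) * (inner ℝ g y : ℝ)) atTop
          (nhds (1 * (inner ℝ g y : ℝ))) := h1.mul_const _
      rw [one_mul] at h3
      simpa [real_inner_smul_left] using h3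
    have hev1 : ∀ᶠ ε : ℝ in nhdsWithin 0 (Set.Ioi 0), J ((1 - ε/R) • g) < m R + δ/2 :=
      hcont.eventually_lt_const hJg
    have hev2 : Set.Ioo (0:ℝ) R ∈ nhdsWithin 0 (Set.Ioi 0) :=
      Ioo_mem_nhdsGT_of_mem (Set.left_mem_Ico.2 hR)
    filter_upwards [hev1, hev2] with ε h1 h2
    obtain ⟨hε1, hε2⟩ := h2
    have hnorm : ‖(1 - ε/R) • g‖ ≤ R - ε := by
      rw [norm_smul, Real.norm_eq_abs]
      have hpos : 0 < 1 - ε/R := by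
        rw [sub_pos, div_lt_one hR]; exact hε2
      rw [abs_of_pos hpos]
      calc (1 - ε/R) * ‖g‖ ≤ (1 - ε/R) * R :=
            mul_le_mul_of_nonneg_left hg hpos.le
        _ = R - ε := by field_simp
    have hup : m (R - ε) ≤ J ((1 - ε/R) • g) := hle _ _ hnorm
    have hlow : m R ≤ m (R - ε) := hmono (R - ε) R (by linarith) (by linarith)
    rw [Real.dist_eq, abs_sub_lt_iff]
    constructor <;> linarith
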